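/- For α, β ∈ IS_n, the semigroups (IS_n, *_α) and (IS_n, *_β) are isomorphic if and only if rank(α) = rank(β). -/

import Mathlib

/-- `PInj n` : the symmetric inverse semigroup `IS_n`, modeled as partial
injective maps `Fin n → Option (Fin n)`. -/
abbrev PInj (n : ℕ) : Type :=
  {f : Fin n → Option (Fin n) // ∀ x y z : Fin n, f x = some z → f y = some z → x = y}

/-- Composition, applying `f` first, then `g` (left-to-right, as in the paper). -/
def PInj.comp {n : ℕ} (f g : PInj n) : PInj n :=
  ⟨fun x => (f.1 x).bind g.1, by
    intro x y z hx hy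
    rcases Option.bind_eq_some_iff.mp hx with ⟨w, hfw, hgw⟩
    rcases Option.bind_eq_some_iff.mp hy with ⟨v, hfv, hgv⟩
    cases g.2 w v z hgw hgv
    exact f.2 x y w hfw hfv⟩

/-- The deformed multiplication `x *_α y = x · α · y` on `PInj n`. -/
def PInj.dmul {n : ℕ} (α x y : PInj n) : PInj n := (x.comp α).comp y

/-- The range (image) of a partial injection. -/
def PInj.ran {n : ℕ} (f : PInj n) : Set (Fin n) := {y | ∃ x, f.1 x = some y}

/-- The domain of a partial injection. -/
def PInj.dom {n : ℕ} (f : PInj n) : Set (Fin n) := {x | (f.1 x).isSome}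

/-- The rank of a partial injection: the cardinality of its range. -/
noncomputable def PInj.rank {n : ℕ} (f : PInj n) : ℕ := f.ran.ncard

/-- The permutation `σ ∈ S_n` viewed as an element of `IS_n`. -/
def PInj.ofPerm {n : ℕ} (σ : Equiv.Perm (Fin n)) : PInj n :=
  ⟨fun x => some (σ x), by
    intro x y z hx hy
    exact σ.injective ((Option.some.inj hx).trans (Option.some.inj hy).symm)⟩

namespace PInj

variable {n : ℕ}

theorem ext' {f g : PInj n} (h : ∀ x, f.1 x = g.1 x) : f = g := Subtype.ext (funext h)

@[simp] theorem comp_apply (f g : PInj n) (x : Fin n) :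
    (f.comp g).1 x = (f.1 x).bind g.1 := rfl

@[simp] theorem ofPerm_apply (σ : Equiv.Perm (Fin n)) (x : Fin n) :
    (ofPerm σ).1 x = some (σ x) := rfl

theorem comp_assoc (f g h : PInj n) : (f.comp g).comp h = f.comp (g.comp h) :=
  ext' fun x => by cases hf : f.1 x <;> simp [hf]

theorem ofPerm_comp_ofPerm (σ τ : Equiv.Perm (Fin n)) :
    (ofPerm σ).comp (ofPerm τ) = ofPerm (σ.trans τ) := ext' fun x => rfl

theorem ofPerm_refl_comp (f : PInj n) : (ofPerm (Equiv.refl (Fin n))).comp f = f :=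
  ext' fun x => rfl

theorem comp_ofPerm_refl (f : PInj n) : f.comp (ofPerm (Equiv.refl (Fin n))) = f :=
  ext' fun x => by cases hf : f.1 x <;> simp [hf]

theorem not_mem_dom {f : PInj n} {x : Fin n} (h : x ∉ f.dom) : f.1 x = none :=
  Option.not_isSome_iff_eq_none.mp h

theorem ran_eq_image (f : PInj n) :
    f.ran = (fun x => (f.1 x).getD x) '' f.dom := by
  ext w
  constructor
  · rintro ⟨x, hx⟩
    exact ⟨x, by simp [dom, hx], by simp [hx]⟩
  · rintro ⟨x, hx, rfl⟩
    obtain ⟨w, hw⟩ := Option.isSome_iff_exists.mp hx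
    exact ⟨x, by simp [hw]⟩

theorem injOn_getD (f : PInj n) : Set.InjOn (fun x => (f.1 x).getD x) f.dom := by
  intro x hx y hy hxy
  obtain ⟨w, hw⟩ := Option.isSome_iff_exists.mp hx
  obtain ⟨v, hv⟩ := Option.isSome_iff_exists.mp hy
  simp only [hw, hv, Option.getD_some] at hxy
  subst hxy
  exact f.2 x y w hw hv

theorem rank_eq_ncard_dom (f : PInj n) : f.rank = f.dom.ncard := by
  rw [rank, ran_eq_image, Set.ncard_image_of_injOn f.injOn_getD]

/-- The canonical bijection from the domain to the range of a partial injection. -/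
noncomputable def domRanEquiv (f : PInj n) : ↥f.dom ≃ ↥f.ran :=
  Equiv.ofBijective (fun x => ⟨(f.1 x).getD x, by
      obtain ⟨w, hw⟩ := Option.isSome_iff_exists.mp x.2
      exact ⟨x, by simp [hw]⟩⟩) (by
    constructor
    · rintro ⟨x, hx⟩ ⟨y, hy⟩ h
      exact Subtype.ext (f.injOn_getD hx hy (by simpa using congrArg Subtype.val h))
    · rintro ⟨w, x, hx⟩
      exact ⟨⟨x, by simp [dom, hx]⟩, by simp [hx]⟩)

theorem apply_domRanEquiv (f : PInj n) (x : ↥f.dom) :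
    f.1 x = some ((domRanEquiv f x : Fin n)) := by
  obtain ⟨w, hw⟩ := Option.isSome_iff_exists.mp x.2
  simp [domRanEquiv, Equiv.ofBijective, hw]

open Classical in
/-- Extend a bijection between two sets (given together with a bijection between
their complements) to a permutation. -/
noncomputable def permExtend {s t : Set (Fin n)} (e : ↥s ≃ ↥t) (e' : ↥sᶜ ≃ ↥tᶜ) :
    Equiv.Perm (Fin n) :=
  (Equiv.Set.sumCompl s).symm.trans ((e.sumCongr e').trans (Equiv.Set.sumCompl t))

open Classical in
theorem permExtend_apply_of_mem {s t : Set (Fin n)} (e : ↥s ≃ ↥t) (e' : ↥sᶜ ≃ ↥tᶜ)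
    {x : Fin n} (hx : x ∈ s) : permExtend e e' x = (e ⟨x, hx⟩ : Fin n) := by
  simp [permExtend, Equiv.Set.sumCompl_symm_apply_of_mem hx]

open Classical in
theorem permExtend_apply_of_not_mem {s t : Set (Fin n)} (e : ↥s ≃ ↥t) (e' : ↥sᶜ ≃ ↥tᶜ)
    {x : Fin n} (hx : x ∉ s) : permExtend e e' x = (e' ⟨x, hx⟩ : Fin n) := by
  simp [permExtend, Equiv.Set.sumCompl_symm_apply_of_notMem hx]

theorem equiv_of_ncard_eq {s t : Set (Fin n)} (h : s.ncard = t.ncard) :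
    Nonempty (↥s ≃ ↥t) :=
  Finite.card_eq.mp (by simpa [Nat.card_coe_set_eq] using h)

theorem compl_equiv_of_ncard_eq {s t : Set (Fin n)} (h : s.ncard = t.ncard) :
    Nonempty (↥sᶜ ≃ ↥tᶜ) := by
  apply equiv_of_ncard_eq
  have hs := Set.ncard_add_ncard_compl s
  have ht := Set.ncard_add_ncard_compl t
  omega

/-- Two partial injections of equal rank differ by composition with permutations. -/
theorem factor {γ δ : PInj n} (h : γ.rank = δ.rank) :
    ∃ p q : Equiv.Perm (Fin n), γ = ((ofPerm p).comp δ).comp (ofPerm q) := by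
  have hd : γ.dom.ncard = δ.dom.ncard := by
    rw [← rank_eq_ncard_dom, ← rank_eq_ncard_dom, h]
  obtain ⟨eD⟩ := equiv_of_ncard_eq hd
  obtain ⟨eD'⟩ := compl_equiv_of_ncard_eq hd
  have hr : δ.ran.ncard = γ.ran.ncard := by rw [← rank, ← rank, h]
  obtain ⟨eR'⟩ := compl_equiv_of_ncard_eq hr
  set eR : ↥δ.ran ≃ ↥γ.ran :=
    (domRanEquiv δ).symm.trans (eD.symm.trans (domRanEquiv γ)) with heR
  refine ⟨permExtend eD eD', permExtend eR eR', ?_⟩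
  apply ext'
  intro x
  by_cases hx : x ∈ γ.dom
  · rw [comp_apply, comp_apply, ofPerm_apply, Option.bind_some,
      permExtend_apply_of_mem eD eD' hx]
    rw [apply_domRanEquiv δ (eD ⟨x, hx⟩), Option.bind_some, ofPerm_apply,
      permExtend_apply_of_mem eR eR' (domRanEquiv δ (eD ⟨x, hx⟩)).2]
    rw [apply_domRanEquiv γ ⟨x, hx⟩]
    congr 1
    simp [heR]
  · rw [not_mem_dom hx, comp_apply, comp_apply, ofPerm_apply, Option.bind_some]
    have : permExtend eD eD' x ∉ δ.dom := by
      rw [permExtend_apply_of_not_mem eD eD' hx]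
      exact (eD' ⟨x, hx⟩).2
    rw [not_mem_dom this, Option.bind_none]

theorem rank_comp_le_right (f g : PInj n) : (f.comp g).rank ≤ g.rank := by
  apply Set.ncard_le_ncard _ (Set.toFinite _)
  rintro w ⟨x, hx⟩
  rcases Option.bind_eq_some_iff.mp hx with ⟨u, _, hu⟩
  exact ⟨u, hu⟩

theorem rank_comp_le_left (f g : PInj n) : (f.comp g).rank ≤ f.rank := by
  classical
  have key : ∀ w ∈ (f.comp g).ran, ∃ u, u ∈ f.ran ∧ g.1 u = some w := by
    rintro w ⟨x, hx⟩
    rcases Option.bind_eq_some_iff.mp hx with ⟨u, hfu, hgu⟩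
    exact ⟨u, ⟨x, hfu⟩, hgu⟩
  apply Set.ncard_le_ncard_of_injOn
    (fun w => if h : ∃ u, u ∈ f.ran ∧ g.1 u = some w then Classical.choose h else w)
  · intro w hw
    simp only [dif_pos (key w hw)]
    exact (Classical.choose_spec (key w hw)).1
  · intro w hw v hv hwv
    simp only [dif_pos (key w hw), dif_pos (key v hv)] at hwv
    have h1 := (Classical.choose_spec (key w hw)).2
    have h2 := (Classical.choose_spec (key v hv)).2
    rw [hwv] at h1
    exact Option.some.inj (h1.symm.trans h2)

theorem rank_dmul_le (α x y : PInj n) : (dmul α x y).rank ≤ α.rank :=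
  le_trans (rank_comp_le_left _ _) (rank_comp_le_right _ _)

open Classical in
/-- Partial identity on a set. -/
noncomputable def pid (s : Set (Fin n)) : PInj n :=
  ⟨fun x => if x ∈ s then some x else none, by
    intro x y z hx hy
    simp only [] at hx hy
    split_ifs at hx hy <;> simp_all⟩

open Classical in
theorem pid_apply (s : Set (Fin n)) (x : Fin n) :
    (pid s).1 x = if x ∈ s then some x else none := rfl

theorem exists_dmul_eq {α γ : PInj n} (hr : γ.rank ≤ α.rank) :
    ∃ x y : PInj n, dmul α x y = γ := by
  classical
  obtain ⟨s, hs, hsc⟩ := Set.exists_subset_card_eq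
    (show γ.rank ≤ α.dom.ncard by rwa [← rank_eq_ncard_dom])
  set δ : PInj n := (pid s).comp α with hδ
  classical
  have hδapp : ∀ x, δ.1 x = if x ∈ s then α.1 x else none := by
    intro x
    rw [hδ, comp_apply, pid_apply]
    by_cases hx : x ∈ s
    · rw [if_pos hx, if_pos hx, Option.bind_some]
    · rw [if_neg hx, if_neg hx, Option.bind_none]
  have hdom : δ.dom = s := by
    ext x
    simp only [dom, Set.mem_setOf_eq, hδapp]
    by_cases hx : x ∈ s
    · rw [if_pos hx]
      exact iff_of_true (hs hx) hx
    · simp [hx]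
  have hrank : γ.rank = δ.rank := by
    rw [rank_eq_ncard_dom δ, hdom, hsc]
  obtain ⟨p, q, hpq⟩ := factor hrank
  refine ⟨(ofPerm p).comp (pid s), ofPerm q, ?_⟩
  rw [dmul, hpq, hδ]
  rw [comp_assoc (ofPerm p) (pid s) α]

/-- The set of products in the deformed semigroup is exactly the set of
elements of rank at most `rank α`. -/
theorem prod_set_eq (α : PInj n) :
    {γ : PInj n | ∃ x y, dmul α x y = γ} = {γ : PInj n | γ.rank ≤ α.rank} := by
  ext γ
  constructor
  · rintro ⟨x, y, rfl⟩
    exact rank_dmul_le α x y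
  · intro hγ
    exact exists_dmul_eq hγ

end PInj

/-- `(IS_n, *_α)` and `(IS_n, *_β)` are isomorphic semigroups iff
`rank α = rank β`. -/
theorem deformed_iso_iff_rank_eq (n : ℕ) (α β : PInj n) :
    (∃ e : PInj n ≃ PInj n, ∀ x y : PInj n,
        e (PInj.dmul α x y) = PInj.dmul β (e x) (e y)) ↔
      α.rank = β.rank := by
  constructor
  · rintro ⟨e, he⟩
    -- the image of the product set of α is the product set of β
    have himg : e '' {γ : PInj n | ∃ x y, PInj.dmul α x y = γ}
        = {γ : PInj n | ∃ x y, PInj.dmul β x y = γ} := by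
      ext γ
      constructor
      · rintro ⟨_, ⟨x, y, rfl⟩, rfl⟩
        exact ⟨e x, e y, (he x y).symm⟩
      · rintro ⟨x, y, rfl⟩
        refine ⟨PInj.dmul α (e.symm x) (e.symm y), ⟨e.symm x, e.symm y, rfl⟩, ?_⟩
        rw [he, e.apply_symm_apply, e.apply_symm_apply]
    have hcard : {γ : PInj n | γ.rank ≤ α.rank}.ncard
        = {γ : PInj n | γ.rank ≤ β.rank}.ncard := by
      rw [← PInj.prod_set_eq, ← PInj.prod_set_eq, ← himg,
        Set.ncard_image_of_injective _ e.injective]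
    by_contra hne
    rcases Nat.lt_or_ge α.rank β.rank with hlt | hge
    · have hss : {γ : PInj n | γ.rank ≤ α.rank} ⊂ {γ : PInj n | γ.rank ≤ β.rank} := by
        constructor
        · intro γ hγ; exact le_trans hγ (le_of_lt hlt)
        · intro hsub
          exact absurd (hsub (le_refl β.rank : β ∈ _)) (by simpa using hlt)
      exact absurd hcard (Set.ncard_lt_ncard hss (Set.toFinite _)).ne
    · have hlt : β.rank < α.rank := lt_of_le_of_ne hge (fun h => hne h.symm)
      have hss : {γ : PInj n | γ.rank ≤ β.rank} ⊂ {γ : PInj n | γ.rank ≤ α.rank} := by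
        constructor
        · intro γ hγ; exact le_trans hγ (le_of_lt hlt)
        · intro hsub
          exact absurd (hsub (le_refl α.rank : α ∈ _)) (by simpa using hlt)
      exact absurd hcard.symm (Set.ncard_lt_ncard hss (Set.toFinite _)).ne
  · intro h
    obtain ⟨p, q, hpq⟩ := PInj.factor (h.symm : β.rank = α.rank)
    refine ⟨⟨fun x => ((PInj.ofPerm q⁻¹).comp x).comp (PInj.ofPerm p⁻¹),
      fun x => ((PInj.ofPerm q).comp x).comp (PInj.ofPerm p), ?_, ?_⟩, ?_⟩
    · intro x
      apply PInj.ext'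
      intro t
      cases hx : x.1 t <;>
        simp [PInj.comp, PInj.ofPerm, Equiv.symm_apply_apply,
          Equiv.apply_symm_apply, hx]
    · intro x
      apply PInj.ext'
      intro t
      cases hx : x.1 t <;>
        simp [PInj.comp, PInj.ofPerm, Equiv.symm_apply_apply,
          Equiv.apply_symm_apply, hx]
    · intro x y
      subst hpq
      apply PInj.ext'
      intro t
      simp only [Equiv.coe_fn_mk, PInj.dmul, PInj.comp, PInj.ofPerm, Option.bind_some,
        Equiv.Perm.coe_inv, Equiv.symm_apply_apply, Equiv.apply_symm_apply, Option.bind_assoc]
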